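/- The subgroups K₁ and K₂ of G intersect trivially, K₁ ∩ K₂ = {0}; consequently K₁ + K₂ is isomorphic to the direct sum K₁ ⊕ K₂ and has exactly μ₁μ₂ elements. -/

import Mathlib

noncomputable section

/-- The coercion of an integer vector in `ℤ³` to `ℝ³`. -/
def coe3 (v : Fin 3 → ℤ) : Fin 3 → ℝ := fun i => (v i : ℝ)

/-- A vector of `ℤ³` is primitive if the greatest common divisor of its components is 1. -/
def IsPrimitive (v : Fin 3 → ℤ) : Prop := Int.gcd (v 0) (Int.gcd (v 1) (v 2)) = 1

/-- The fundamental parallelepiped spanned by two vectors: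
`◊(a,b) = {s•a + t•b : s,t ∈ [0,1)}`. -/
def para2 (a b : Fin 3 → ℝ) : Set (Fin 3 → ℝ) :=
  {x | ∃ s t : ℝ, 0 ≤ s ∧ s < 1 ∧ 0 ≤ t ∧ t < 1 ∧ x = s • a + t • b}

/-- The fundamental parallelepiped spanned by three vectors:
`◊(a,b,c) = {s•a + t•b + u•c : s,t,u ∈ [0,1)}`. -/
def para3 (a b c : Fin 3 → ℝ) : Set (Fin 3 → ℝ) :=
  {x | ∃ s t u : ℝ, 0 ≤ s ∧ s < 1 ∧ 0 ≤ t ∧ t < 1 ∧ 0 ≤ u ∧ u < 1 ∧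
    x = s • a + t • b + u • c}

/-- The integral points `ℤ³ ∩ ◊(a,b)` of a two-dimensional fundamental parallelepiped. -/
def H2pts (a b : Fin 3 → ℤ) : Set (Fin 3 → ℤ) := {x | coe3 x ∈ para2 (coe3 a) (coe3 b)}

/-- The integral points `ℤ³ ∩ ◊(a,b,c)` of a three-dimensional fundamental parallelepiped. -/
def H3pts (a b c : Fin 3 → ℤ) : Set (Fin 3 → ℤ) :=
  {x | coe3 x ∈ para3 (coe3 a) (coe3 b) (coe3 c)}

/-- The subgroup `ℤ³ ∩ (ℝa + ℝb)` of `ℤ³` of integral points of the plane spanned by `a, b`. -/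
def planeSubgroup (a b : Fin 3 → ℝ) : AddSubgroup (Fin 3 → ℤ) where
  carrier := {x | ∃ s t : ℝ, coe3 x = s • a + t • b}
  zero_mem' := ⟨0, 0, by funext i; simp [coe3]⟩
  add_mem' := by
    rintro x y ⟨s, t, hx⟩ ⟨u, v, hy⟩
    refine ⟨s + u, t + v, ?_⟩
    funext i
    have h1 := congrFun hx i
    have h2 := congrFun hy i
    simp only [coe3, Pi.add_apply, Pi.smul_apply, smul_eq_mul, Int.cast_add] at h1 h2 ⊢
    rw [h1, h2]; ring
  neg_mem' := by
    rintro x ⟨s, t, hx⟩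
    refine ⟨-s, -t, ?_⟩
    funext i
    have h1 := congrFun hx i
    simp only [coe3, Pi.add_apply, Pi.neg_apply, Pi.smul_apply, smul_eq_mul,
      Int.cast_neg, neg_smul] at h1 ⊢
    rw [h1]; ring

/-- The lattice `Λ = ℤw₁ + ℤw₂ + ℤw₃`. -/
def lattice3 (w₁ w₂ w₃ : Fin 3 → ℤ) : AddSubgroup (Fin 3 → ℤ) :=
  AddSubgroup.closure {w₁, w₂, w₃}

/-- The finite abelian group `G = ℤ³/Λ`. -/
abbrev Gquot (w₁ w₂ w₃ : Fin 3 → ℤ) := (Fin 3 → ℤ) ⧸ lattice3 w₁ w₂ w₃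

/-- The subgroup `K` of `G = ℤ³/Λ` given by the image of `ℤ³ ∩ (ℝa + ℝb)`. -/
def Ksub (w₁ w₂ w₃ a b : Fin 3 → ℤ) : AddSubgroup (Gquot w₁ w₂ w₃) :=
  AddSubgroup.map (QuotientAddGroup.mk' (lattice3 w₁ w₂ w₃)) (planeSubgroup (coe3 a) (coe3 b))


section Aux

lemma coe3_add (x y : Fin 3 → ℤ) : coe3 (x + y) = coe3 x + coe3 y := by
  funext i; simp [coe3]

lemma coe3_sub (x y : Fin 3 → ℤ) : coe3 (x - y) = coe3 x - coe3 y := by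
  funext i; simp [coe3]

lemma coe3_zsmul (n : ℤ) (x : Fin 3 → ℤ) : coe3 (n • x) = (n : ℝ) • coe3 x := by
  funext i; simp [coe3]

lemma coe3_inj : Function.Injective coe3 := by
  intro x y h
  funext i
  have := congrFun h i
  simpa [coe3] using this

lemma li_coeffs {w₁ w₂ w₃ : Fin 3 → ℤ}
    (hli : LinearIndependent ℝ ![coe3 w₁, coe3 w₂, coe3 w₃])
    {a b c : ℝ} (h : a • coe3 w₁ + b • coe3 w₂ + c • coe3 w₃ = 0) :
    a = 0 ∧ b = 0 ∧ c = 0 := by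
  have hz := Fintype.linearIndependent_iff.mp hli ![a, b, c]
    (by simpa [Fin.sum_univ_three] using h)
  exact ⟨hz 0, hz 1, hz 2⟩

lemma mem_lattice3 {w₁ w₂ w₃ x : Fin 3 → ℤ} :
    x ∈ lattice3 w₁ w₂ w₃ ↔ ∃ p q r : ℤ, x = p • w₁ + q • w₂ + r • w₃ := by
  constructor
  · intro hx
    induction hx using AddSubgroup.closure_induction with
    | mem y hy =>
      simp only [Set.mem_insert_iff, Set.mem_singleton_iff] at hy
      rcases hy with rfl | rfl | rfl
      · exact ⟨1, 0, 0, by simp⟩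
      · exact ⟨0, 1, 0, by simp⟩
      · exact ⟨0, 0, 1, by simp⟩
    | zero => exact ⟨0, 0, 0, by simp⟩
    | add a b _ _ ha hb =>
      obtain ⟨p, q, r, rfl⟩ := ha
      obtain ⟨p', q', r', rfl⟩ := hb
      exact ⟨p + p', q + q', r + r', by simp [add_smul]; abel⟩
    | neg a _ ha =>
      obtain ⟨p, q, r, rfl⟩ := ha
      exact ⟨-p, -q, -r, by simp [neg_smul]; abel⟩
  · rintro ⟨p, q, r, rfl⟩
    have h1 : w₁ ∈ lattice3 w₁ w₂ w₃ := AddSubgroup.subset_closure (by simp)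
    have h2 : w₂ ∈ lattice3 w₁ w₂ w₃ := AddSubgroup.subset_closure (by simp)
    have h3 : w₃ ∈ lattice3 w₁ w₂ w₃ := AddSubgroup.subset_closure (by simp)
    exact add_mem (add_mem (zsmul_mem h1 p) (zsmul_mem h2 q)) (zsmul_mem h3 r)

lemma primitive_scalar {v x : Fin 3 → ℤ} (hp : IsPrimitive v) {t : ℝ}
    (h : coe3 x = t • coe3 v) : ∃ n : ℤ, t = (n : ℝ) := by
  have h0 : (x 0 : ℝ) = t * (v 0 : ℝ) := by simpa [coe3] using congrFun h 0
  have h1 : (x 1 : ℝ) = t * (v 1 : ℝ) := by simpa [coe3] using congrFun h 1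
  have h2 : (x 2 : ℝ) = t * (v 2 : ℝ) := by simpa [coe3] using congrFun h 2
  set A := Int.gcdA (v 0) (Int.gcd (v 1) (v 2)) with hA
  set B := Int.gcdB (v 0) (Int.gcd (v 1) (v 2)) with hB
  set C := Int.gcdA (v 1) (v 2) with hC
  set D := Int.gcdB (v 1) (v 2) with hD
  have e1 : (1 : ℤ) = v 0 * A + ((Int.gcd (v 1) (v 2) : ℤ)) * B := by
    have := Int.gcd_eq_gcd_ab (v 0) ((Int.gcd (v 1) (v 2) : ℤ))
    rw [hp] at this
    exact_mod_cast this
  have e2 : ((Int.gcd (v 1) (v 2) : ℤ)) = v 1 * C + v 2 * D := Int.gcd_eq_gcd_ab _ _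
  have key : (1 : ℤ) = v 0 * A + (v 1 * C + v 2 * D) * B := by rw [e1, e2]
  have keyR : (1 : ℝ) = (v 0 : ℝ) * A + ((v 1 : ℝ) * C + (v 2 : ℝ) * D) * B := by
    exact_mod_cast congrArg (fun z : ℤ => (z : ℝ)) key
  refine ⟨x 0 * A + x 1 * (C * B) + x 2 * (D * B), ?_⟩
  push_cast
  rw [h0, h1, h2]
  linear_combination t * keyR

/-- The addition map from the product of two subgroups to their join. -/
def prodToSup {G : Type*} [AddCommGroup G] (H K : AddSubgroup G) :
    (↥H × ↥K) →+ ↥(H ⊔ K) where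
  toFun p := ⟨(p.1 : G) + p.2,
    add_mem (AddSubgroup.mem_sup_left p.1.2) (AddSubgroup.mem_sup_right p.2.2)⟩
  map_zero' := by ext; simp
  map_add' p q := by
    ext
    simp only [Prod.fst_add, Prod.snd_add, AddSubgroup.coe_add]
    abel

lemma prodToSup_bijective {G : Type*} [AddCommGroup G] (H K : AddSubgroup G)
    (hd : H ⊓ K = ⊥) : Function.Bijective (prodToSup H K) := by
  constructor
  · intro p q h
    have hv : (p.1 : G) + p.2 = (q.1 : G) + q.2 := congrArg Subtype.val h
    have hmem : (p.1 : G) - q.1 ∈ H ⊓ K := by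
      rw [AddSubgroup.mem_inf]
      refine ⟨sub_mem p.1.2 q.1.2, ?_⟩
      have heq : (p.1 : G) - q.1 = (q.2 : G) - p.2 := by
        rw [sub_eq_sub_iff_add_eq_add, hv]
        exact add_comm _ _
      rw [heq]
      exact sub_mem q.2.2 p.2.2
    rw [hd, AddSubgroup.mem_bot, sub_eq_zero] at hmem
    have h2 : (p.2 : G) = q.2 := by
      rw [hmem] at hv
      exact add_left_cancel hv
    exact Prod.ext (Subtype.ext hmem) (Subtype.ext h2)
  · rintro ⟨x, hx⟩
    rcases AddSubgroup.mem_sup.mp hx with ⟨y, hy, z, hz, hyz⟩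
    exact ⟨(⟨y, hy⟩, ⟨z, hz⟩), Subtype.ext hyz⟩

lemma card_Ksub (w₁ w₂ w₃ A B : Fin 3 → ℤ)
    (hAmem : A ∈ lattice3 w₁ w₂ w₃) (hBmem : B ∈ lattice3 w₁ w₂ w₃)
    (hint : ∀ x : Fin 3 → ℤ, x ∈ lattice3 w₁ w₂ w₃ → ∀ s t : ℝ,
      coe3 x = s • coe3 A + t • coe3 B → (∃ m : ℤ, s = m) ∧ (∃ n : ℤ, t = n)) :
    Nat.card ↥(Ksub w₁ w₂ w₃ A B) = (H2pts A B).ncard := by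
  rw [← Nat.card_coe_set_eq]
  have hmemf : ∀ x : ↥(H2pts A B),
      QuotientAddGroup.mk' (lattice3 w₁ w₂ w₃) x.1 ∈ Ksub w₁ w₂ w₃ A B := by
    rintro ⟨x, hx⟩
    obtain ⟨s, t, _, _, _, _, hxe⟩ := hx
    exact ⟨x, ⟨s, t, hxe⟩, rfl⟩
  set f : ↥(H2pts A B) → ↥(Ksub w₁ w₂ w₃ A B) :=
    fun x => ⟨QuotientAddGroup.mk' (lattice3 w₁ w₂ w₃) x.1, hmemf x⟩ with hf
  have hbij : Function.Bijective f := by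
    constructor
    · rintro ⟨x, hx⟩ ⟨y, hy⟩ h
      obtain ⟨s, t, hs0, hs1, ht0, ht1, hxe⟩ := hx
      obtain ⟨s', t', hs0', hs1', ht0', ht1', hye⟩ := hy
      have hq : (x : (Fin 3 → ℤ) ⧸ lattice3 w₁ w₂ w₃) = y := by
        simpa [hf, QuotientAddGroup.mk'_apply] using congrArg Subtype.val h
      have hsub : x - y ∈ lattice3 w₁ w₂ w₃ := QuotientAddGroup.eq_iff_sub_mem.mp hq
      have hce : coe3 (x - y) = (s - s') • coe3 A + (t - t') • coe3 B := by
        rw [coe3_sub, hxe, hye]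
        module
      obtain ⟨⟨m, hm⟩, ⟨n, hn⟩⟩ := hint _ hsub _ _ hce
      have hm0 : m = 0 := by
        have hml : (-1 : ℝ) < m := by rw [← hm]; linarith
        have hmr : (m : ℝ) < 1 := by rw [← hm]; linarith
        have : (-1 : ℤ) < m ∧ m < 1 := ⟨by exact_mod_cast hml, by exact_mod_cast hmr⟩
        omega
      have hn0 : n = 0 := by
        have hnl : (-1 : ℝ) < n := by rw [← hn]; linarith
        have hnr : (n : ℝ) < 1 := by rw [← hn]; linarith
        have : (-1 : ℤ) < n ∧ n < 1 := ⟨by exact_mod_cast hnl, by exact_mod_cast hnr⟩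
        omega
      have hss : s = s' := by
        have := hm; rw [hm0] at this; push_cast at this; linarith
      have htt : t = t' := by
        have := hn; rw [hn0] at this; push_cast at this; linarith
      have : coe3 x = coe3 y := by rw [hxe, hye, hss, htt]
      exact Subtype.ext (coe3_inj this)
    · rintro ⟨g, hg⟩
      obtain ⟨x, ⟨s, t, hxe⟩, rfl⟩ := hg
      set x' : Fin 3 → ℤ := x - (⌊s⌋ • A + ⌊t⌋ • B) with hx'
      have hx'e : coe3 x' = Int.fract s • coe3 A + Int.fract t • coe3 B := by
        rw [hx', coe3_sub, coe3_add, coe3_zsmul, coe3_zsmul, hxe]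
        unfold Int.fract
        module
      have hx'mem : x' ∈ H2pts A B :=
        ⟨Int.fract s, Int.fract t, Int.fract_nonneg s, Int.fract_lt_one s,
          Int.fract_nonneg t, Int.fract_lt_one t, hx'e⟩
      refine ⟨⟨x', hx'mem⟩, Subtype.ext ?_⟩
      show QuotientAddGroup.mk' (lattice3 w₁ w₂ w₃) x' = QuotientAddGroup.mk' _ x
      have hdiff : x' - x ∈ lattice3 w₁ w₂ w₃ := by
        have : x' - x = -(⌊s⌋ • A + ⌊t⌋ • B) := by rw [hx']; abel
        rw [this]
        exact neg_mem (add_mem (zsmul_mem hAmem _) (zsmul_mem hBmem _))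
      simpa [QuotientAddGroup.mk'_apply] using QuotientAddGroup.eq_iff_sub_mem.mpr hdiff
  exact (Nat.card_eq_of_bijective f hbij).symm

end Aux

/-- The subgroups `K₁` and `K₂` of `G` intersect trivially,
`K₁ ∩ K₂ = {0}`; consequently `K₁ + K₂` is isomorphic to the direct sum `K₁ ⊕ K₂` and has
exactly `μ₁μ₂` elements. -/
theorem K1_inter_K2_trivial (w₁ w₂ w₃ : Fin 3 → ℤ)
    (hnn₁ : ∀ i, 0 ≤ w₁ i) (hnn₂ : ∀ i, 0 ≤ w₂ i) (hnn₃ : ∀ i, 0 ≤ w₃ i)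
    (hp₁ : IsPrimitive w₁) (hp₂ : IsPrimitive w₂) (hp₃ : IsPrimitive w₃)
    (hli : LinearIndependent ℝ ![coe3 w₁, coe3 w₂, coe3 w₃])
    (μ₁ μ₂ : ℕ) (hμ₁ : μ₁ = (H2pts w₂ w₃).ncard) (hμ₂ : μ₂ = (H2pts w₁ w₃).ncard) :
    Ksub w₁ w₂ w₃ w₂ w₃ ⊓ Ksub w₁ w₂ w₃ w₁ w₃ = ⊥ ∧
    Nonempty ((↥(Ksub w₁ w₂ w₃ w₂ w₃ ⊔ Ksub w₁ w₂ w₃ w₁ w₃)) ≃+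
      (↥(Ksub w₁ w₂ w₃ w₂ w₃) × ↥(Ksub w₁ w₂ w₃ w₁ w₃))) ∧
    Nat.card ↥(Ksub w₁ w₂ w₃ w₂ w₃ ⊔ Ksub w₁ w₂ w₃ w₁ w₃) = μ₁ * μ₂ := by
  classical
  have hW1 : w₁ ∈ lattice3 w₁ w₂ w₃ := AddSubgroup.subset_closure (by simp)
  have hW2 : w₂ ∈ lattice3 w₁ w₂ w₃ := AddSubgroup.subset_closure (by simp)
  have hW3 : w₃ ∈ lattice3 w₁ w₂ w₃ := AddSubgroup.subset_closure (by simp)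
  have hint₁ : ∀ x : Fin 3 → ℤ, x ∈ lattice3 w₁ w₂ w₃ → ∀ s t : ℝ,
      coe3 x = s • coe3 w₂ + t • coe3 w₃ → (∃ m : ℤ, s = m) ∧ (∃ n : ℤ, t = n) := by
    intro x hx s t hxe
    obtain ⟨p, q, r, rfl⟩ := mem_lattice3.mp hx
    have hc : coe3 (p • w₁ + q • w₂ + r • w₃)
        = (p : ℝ) • coe3 w₁ + (q : ℝ) • coe3 w₂ + (r : ℝ) • coe3 w₃ := by
      rw [coe3_add, coe3_add, coe3_zsmul, coe3_zsmul, coe3_zsmul]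
    have h0 : (p : ℝ) • coe3 w₁ + ((q : ℝ) - s) • coe3 w₂ + ((r : ℝ) - t) • coe3 w₃ = 0 := by
      have := hxe
      rw [hc] at this
      linear_combination (norm := module) this
    obtain ⟨_, hb, hcc⟩ := li_coeffs hli h0
    exact ⟨⟨q, by linarith⟩, ⟨r, by linarith⟩⟩
  have hint₂ : ∀ x : Fin 3 → ℤ, x ∈ lattice3 w₁ w₂ w₃ → ∀ s t : ℝ,
      coe3 x = s • coe3 w₁ + t • coe3 w₃ → (∃ m : ℤ, s = m) ∧ (∃ n : ℤ, t = n) := by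
    intro x hx s t hxe
    obtain ⟨p, q, r, rfl⟩ := mem_lattice3.mp hx
    have hc : coe3 (p • w₁ + q • w₂ + r • w₃)
        = (p : ℝ) • coe3 w₁ + (q : ℝ) • coe3 w₂ + (r : ℝ) • coe3 w₃ := by
      rw [coe3_add, coe3_add, coe3_zsmul, coe3_zsmul, coe3_zsmul]
    have h0 : ((p : ℝ) - s) • coe3 w₁ + (q : ℝ) • coe3 w₂ + ((r : ℝ) - t) • coe3 w₃ = 0 := by
      have := hxe
      rw [hc] at this
      linear_combination (norm := module) this
    obtain ⟨ha, _, hcc⟩ := li_coeffs hli h0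
    exact ⟨⟨p, by linarith⟩, ⟨r, by linarith⟩⟩
  have hd : Ksub w₁ w₂ w₃ w₂ w₃ ⊓ Ksub w₁ w₂ w₃ w₁ w₃ = ⊥ := by
    rw [eq_bot_iff]
    intro g hg
    rw [AddSubgroup.mem_inf] at hg
    obtain ⟨⟨x, hx, rfl⟩, y, hy, hyx⟩ := hg
    obtain ⟨s, t, hxe⟩ := hx
    obtain ⟨u, v, hye⟩ := hy
    have hq : (y : (Fin 3 → ℤ) ⧸ lattice3 w₁ w₂ w₃) = x := by
      simpa [QuotientAddGroup.mk'_apply] using hyx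
    have hsub : y - x ∈ lattice3 w₁ w₂ w₃ := QuotientAddGroup.eq_iff_sub_mem.mp hq
    obtain ⟨p, q, r, hpqr⟩ := mem_lattice3.mp hsub
    have hce : coe3 (y - x)
        = (p : ℝ) • coe3 w₁ + (q : ℝ) • coe3 w₂ + (r : ℝ) • coe3 w₃ := by
      rw [hpqr, coe3_add, coe3_add, coe3_zsmul, coe3_zsmul, coe3_zsmul]
    have h0 : (u - (p : ℝ)) • coe3 w₁ + (-s - (q : ℝ)) • coe3 w₂
        + ((v - t) - (r : ℝ)) • coe3 w₃ = 0 := by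
      have h1 : coe3 y - coe3 x
          = (p : ℝ) • coe3 w₁ + (q : ℝ) • coe3 w₂ + (r : ℝ) • coe3 w₃ := by
        rw [← coe3_sub, hce]
      rw [hxe, hye] at h1
      linear_combination (norm := module) h1
    obtain ⟨_, hb, _⟩ := li_coeffs hli h0
    have hsq : s = -(q : ℝ) := by linarith
    have hsc : coe3 (x + q • w₂) = t • coe3 w₃ := by
      rw [coe3_add, coe3_zsmul, hxe, hsq]
      module
    obtain ⟨n, hn⟩ := primitive_scalar hp₃ hsc
    have hxval : x = n • w₃ - q • w₂ := by
      apply coe3_inj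
      rw [coe3_sub, coe3_zsmul, coe3_zsmul]
      have : coe3 (x + q • w₂) = (n : ℝ) • coe3 w₃ := by rw [hsc, hn]
      rw [coe3_add, coe3_zsmul] at this
      linear_combination (norm := module) this
    have hxmem : x ∈ lattice3 w₁ w₂ w₃ := by
      rw [hxval]
      exact sub_mem (zsmul_mem hW3 n) (zsmul_mem hW2 q)
    rw [AddSubgroup.mem_bot]
    simpa [QuotientAddGroup.mk'_apply] using (QuotientAddGroup.eq_zero_iff x).mpr hxmem
  have hbij := prodToSup_bijective _ _ hd
  have e := (AddEquiv.ofBijective (prodToSup (Ksub w₁ w₂ w₃ w₂ w₃) (Ksub w₁ w₂ w₃ w₁ w₃))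
    hbij).symm
  refine ⟨hd, ⟨e⟩, ?_⟩
  have hcard : Nat.card ↥(Ksub w₁ w₂ w₃ w₂ w₃ ⊔ Ksub w₁ w₂ w₃ w₁ w₃)
      = Nat.card (↥(Ksub w₁ w₂ w₃ w₂ w₃) × ↥(Ksub w₁ w₂ w₃ w₁ w₃)) :=
    Nat.card_congr e.toEquiv
  rw [hcard, Nat.card_prod,
    card_Ksub w₁ w₂ w₃ w₂ w₃ hW2 hW3 hint₁,
    card_Ksub w₁ w₂ w₃ w₁ w₃ hW1 hW3 hint₂, hμ₁, hμ₂]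


end
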